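/- For natural numbers n and u with 1 ≤ u ≤ n-1, define c(u,v) = u(v+1) for 0 ≤ v ≤ n-u and c(u,v) = u(2(n-u)-v+1) for n-u < v ≤ 2(n-u). Then the sum of c(u,v)² over v from 0 to 2(n-u) equals P_n(u) := (1/3)·u²·(n-u+1)·(2(n-u)² + 4(n-u) + 3). -/

import Mathlib

/-- The counting constants `c(u,v)` from the paper. -/
def c (n u v : ℕ) : ℕ :=
  if v ≤ n - u then u * (v + 1) else u * (2 * (n - u) - v + 1)

lemma sq_sum (p : ℕ) : ∑ v ∈ Finset.range p, ((v : ℚ) + 1) ^ 2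
    = (p : ℚ) * ((p : ℚ) + 1) * (2 * (p : ℚ) + 1) / 6 := by
  induction p with
  | zero => simp
  | succ k ih =>
    rw [Finset.sum_range_succ, ih]
    push_cast
    field_simp
    ring

/-- `∑_{v=0}^{2(n-u)} c(u,v)² = P_n(u)`. -/
theorem sum_c_sq (n u : ℕ) (hu1 : 1 ≤ u) (hu2 : u ≤ n - 1) :
    (∑ v ∈ Finset.range (2 * (n - u) + 1), ((c n u v : ℚ)) ^ 2)
      = (1 / 3) * (u : ℚ) ^ 2 * (((n - u : ℕ) : ℚ) + 1)
          * (2 * ((n - u : ℕ) : ℚ) ^ 2 + 4 * ((n - u : ℕ) : ℚ) + 3) := by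
  set m := n - u with hm
  have hsplit : Finset.range (2 * m + 1)
      = Finset.range (m + 1) ∪ Finset.Ico (m + 1) (2 * m + 1) := by
    rw [Finset.range_eq_Ico, Finset.range_eq_Ico]
    rw [Finset.Ico_union_Ico_eq_Ico (by omega) (by omega)]
  have hdisj : Disjoint (Finset.range (m + 1)) (Finset.Ico (m + 1) (2 * m + 1)) := by
    simp [Finset.disjoint_left, Finset.mem_range, Finset.mem_Ico]
    omega
  rw [hsplit, Finset.sum_union hdisj]
  have h1 : ∑ v ∈ Finset.range (m + 1), ((c n u v : ℚ)) ^ 2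
      = (u : ℚ) ^ 2 * ∑ v ∈ Finset.range (m + 1), ((v : ℚ) + 1) ^ 2 := by
    rw [Finset.mul_sum]
    apply Finset.sum_congr rfl
    intro v hv
    rw [Finset.mem_range] at hv
    have : c n u v = u * (v + 1) := by
      unfold c; rw [if_pos (by omega)]
    rw [this]; push_cast; ring
  have h2 : ∑ v ∈ Finset.Ico (m + 1) (2 * m + 1), ((c n u v : ℚ)) ^ 2
      = (u : ℚ) ^ 2 * ∑ v ∈ Finset.range m, ((v : ℚ) + 1) ^ 2 := by
    rw [Finset.sum_Ico_eq_sum_range]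
    have hlen : 2 * m + 1 - (m + 1) = m := by omega
    rw [hlen]
    have hterm : ∀ i ∈ Finset.range m,
        ((c n u ((m + 1) + i) : ℚ)) ^ 2
          = ((fun j : ℕ => ((u : ℚ) * ((j : ℚ) + 1)) ^ 2) (m - 1 - i)) := by
      intro i hi
      rw [Finset.mem_range] at hi
      have : c n u ((m + 1) + i) = u * (m - i) := by
        unfold c
        rw [if_neg (by omega)]
        congr 1
        omega
      rw [this]
      have hmi : (m - i : ℕ) = (m - 1 - i) + 1 := by omega
      rw [hmi]
      push_cast
      ring
    rw [Finset.sum_congr rfl hterm,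
      Finset.sum_range_reflect (fun j : ℕ => ((u : ℚ) * ((j : ℚ) + 1)) ^ 2) m]
    rw [Finset.mul_sum]
    apply Finset.sum_congr rfl
    intro j _
    ring
  rw [h1, h2, sq_sum, sq_sum]
  push_cast
  ring
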